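/- Let the sortition instance be κ-rich with n pool members and panel size k ≥ 1, and let c ≤ κ'·n for some 0 ≤ κ' < κ. Then the external manipulability of uniform panel selection (MaxEntropy) satisfies: for every coalition C of size c, every joint misreport, and every non-coalition member i ∉ C, π(i) − π̃(i) ≤ k/(κ^k · n), where π and π̃ are the selection probabilities of i under the uniform distribution over the true panel set 𝒫 and over the manipulated panel set 𝒫̃, respectively. -/

import Mathlib

open scoped Classical

/-- A sortition instance (features `feat`, panel set `Pan`, panel size `k`) is `κ`-rich if there
is a set `Wstar` of feature-value vectors present in the pool such that every vector in `Wstar`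
is shared by at least `κ·n + k` pool members, and some panel consists solely of members with
vectors in `Wstar`. -/
def IsRich {N : Type*} [Fintype N] {F : Type*} {V : F → Type*}
    (feat : N → ∀ f : F, V f) (Pan : Finset (Finset N)) (k : ℕ) (κ : ℝ) : Prop :=
  ∃ Wstar : Set (∀ f : F, V f),
    (∀ wv ∈ Wstar, ∃ i : N, feat i = wv) ∧
    (∀ wv ∈ Wstar,
      κ * (Fintype.card N) + k ≤ ((Finset.univ.filter fun i : N => feat i = wv).card : ℝ)) ∧
    ∃ P₀ ∈ Pan, ∀ i ∈ P₀, feat i ∈ Wstar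

set_option linter.unusedSectionVars false

section Aux

variable {N : Type*} [Fintype N] [DecidableEq N] {W : Type*}

/-- Panels with the same multiset of feature vectors as `s`. -/
noncomputable def copies (feat : N → W) (s : Finset N) : Finset (Finset N) :=
  Finset.univ.filter fun P =>
    ∀ w : W, (P.filter fun t => feat t = w).card = (s.filter fun t => feat t = w).card

lemma mem_copies_self (feat : N → W) (s : Finset N) : s ∈ copies feat s := by
  simp [copies]

lemma card_of_mem_copies {feat : N → W} {s P : Finset N} (h : P ∈ copies feat s) :
    P.card = s.card := by
  simp only [copies, Finset.mem_filter, Finset.mem_univ, true_and] at h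
  have key : ∀ (Q : Finset N) (w : W),
      w ∈ Q.image feat ↔ (Q.filter fun t => feat t = w).card ≠ 0 := by
    intro Q w
    rw [Ne, Finset.card_eq_zero, ← Finset.not_nonempty_iff_eq_empty, not_not,
      Finset.filter_nonempty_iff]
    simp [Finset.mem_image]
  have himg : P.image feat = s.image feat := by
    ext w
    rw [key, key, h w]
  rw [Finset.card_eq_sum_card_fiberwise (fun x hx => Finset.mem_image_of_mem feat hx :
        ∀ x ∈ P, feat x ∈ P.image feat),
      Finset.card_eq_sum_card_fiberwise (fun x hx => Finset.mem_image_of_mem feat hx :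
        ∀ x ∈ s, feat x ∈ s.image feat), himg]
  exact Finset.sum_congr rfl fun w _ => h w

lemma filter_card_of_mem_copies {feat : N → W} {s P : Finset N} (q : W → Prop)
    (h : P ∈ copies feat s) :
    (P.filter fun t => q (feat t)).card = (s.filter fun t => q (feat t)).card := by
  apply card_of_mem_copies (feat := feat)
  simp only [copies, Finset.mem_filter, Finset.mem_univ, true_and] at h ⊢
  intro w
  rw [Finset.filter_filter, Finset.filter_filter]
  by_cases hq : q w
  · have e : ∀ Q : Finset N,
        (Q.filter fun t => q (feat t) ∧ feat t = w) = Q.filter fun t => feat t = w := by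
      intro Q
      apply Finset.filter_congr
      intro t _
      constructor
      · exact fun h' => h'.2
      · exact fun h' => ⟨by rw [h']; exact hq, h'⟩
    rw [e, e, h w]
  · have e : ∀ Q : Finset N,
        (Q.filter fun t => q (feat t) ∧ feat t = w) = ∅ := by
      intro Q
      apply Finset.filter_false_of_mem
      intro t _
      rintro ⟨h1, h2⟩
      rw [h2] at h1
      exact hq h1
    rw [e, e]

lemma copies_card_lower (feat : N → W) (k : ℕ) (M : ℝ) (hM : 0 ≤ M) :
    ∀ s : Finset N, s.card ≤ k →
      (∀ x ∈ s, M + k ≤ ((Finset.univ.filter fun t : N => feat t = feat x).card : ℝ)) →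
      M ^ s.card / (Nat.factorial s.card : ℝ) ≤ ((copies feat s).card : ℝ) := by
  intro s
  induction s using Finset.induction_on with
  | empty =>
      intro _ _
      simp only [Finset.card_empty, pow_zero, Nat.factorial_zero, Nat.cast_one, div_one]
      have h1 : 1 ≤ (copies feat (∅ : Finset N)).card :=
        Finset.card_pos.mpr ⟨∅, mem_copies_self feat ∅⟩
      exact_mod_cast h1
  | @insert x t hx ih =>
      intro hsk hbig
      have hcard : (insert x t).card = t.card + 1 := Finset.card_insert_of_notMem hx
      have htk : t.card ≤ k := by omega
      have iht := ih htk (fun y hy => hbig y (Finset.mem_insert_of_mem hy))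
      set c := t.card with hc
      -- the pairs (P, y) with P a copy of t and y a fresh member of x's class
      set cls : Finset N := Finset.univ.filter fun t : N => feat t = feat x with hcls
      set pairs : Finset ((_ : Finset N) × N) :=
        (copies feat t).sigma (fun P => cls \ P) with hpairs
      set φ : (_ : Finset N) × N → Finset N := fun p => insert p.2 p.1 with hφ
      -- image lands in copies of (insert x t)
      have himg : ∀ p ∈ pairs, φ p ∈ copies feat (insert x t) := by
        rintro ⟨P, y⟩ hp
        rw [hpairs, Finset.mem_sigma] at hp
        obtain ⟨hP, hy⟩ := hp
        rw [Finset.mem_sdiff, hcls, Finset.mem_filter] at hy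
        obtain ⟨⟨-, hfy⟩, hyP⟩ := hy
        simp only [copies, Finset.mem_filter, Finset.mem_univ, true_and] at hP ⊢
        intro w
        show ((insert y P).filter fun t => feat t = w).card = _
        rw [Finset.filter_insert, Finset.filter_insert]
        by_cases hw : feat x = w
        · have hyw : feat y = w := by rw [hfy, hw]
          rw [if_pos hyw, if_pos hw,
            Finset.card_insert_of_notMem (fun hmem => hyP (Finset.mem_filter.mp hmem).1),
            Finset.card_insert_of_notMem (fun hmem => hx (Finset.mem_filter.mp hmem).1),
            hP w]
        · have hyw : ¬ feat y = w := by rw [hfy]; exact hw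
          rw [if_neg hyw, if_neg hw, hP w]
      -- fibers of φ over pairs have size at most c + 1
      have hfiber : ∀ Q ∈ pairs.image φ, (pairs.filter fun p => φ p = Q).card ≤ c + 1 := by
        intro Q hQ
        obtain ⟨p₁, hp₁, rfl⟩ := Finset.mem_image.mp hQ
        have hQmem : φ p₁ ∈ copies feat (insert x t) := himg p₁ hp₁
        have hQcard : (φ p₁).card = c + 1 := by
          rw [card_of_mem_copies hQmem, hcard]
        rw [← hQcard]
        apply Finset.card_le_card_of_injOn (fun p => p.2)
        · intro p hp
          simp only [Finset.mem_coe, Finset.mem_filter] at hp ⊢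
          have : p.2 ∈ φ p := Finset.mem_insert_self _ _
          rwa [hp.2] at this
        · intro p hp p' hp' hpp
          simp only [Finset.coe_filter, Set.mem_setOf_eq] at hp hp'
          have hnp : p.2 ∉ p.1 := by
            have := (Finset.mem_sigma.mp hp.1).2
            exact (Finset.mem_sdiff.mp this).2
          have hnp' : p'.2 ∉ p'.1 := by
            have := (Finset.mem_sigma.mp hp'.1).2
            exact (Finset.mem_sdiff.mp this).2
          have e1 : p.1 = (φ p₁).erase p.2 := by
            rw [← hp.2, hφ, Finset.erase_insert hnp]
          have e2 : p'.1 = (φ p₁).erase p'.2 := by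
            rw [← hp'.2, hφ, Finset.erase_insert hnp']
          have hpp' : p.2 = p'.2 := hpp
          have : p.1 = p'.1 := by rw [e1, e2, hpp']
          obtain ⟨a, b⟩ := p
          obtain ⟨a', b'⟩ := p'
          simp only at hpp this
          subst hpp this
          rfl
      -- lower bound on pairs
      have hlowpairs : (M + 1) * ((copies feat t).card : ℝ) ≤ (pairs.card : ℝ) := by
        rw [hpairs, Finset.card_sigma, Nat.cast_sum]
        have hbnd : ∀ P ∈ copies feat t, (M + 1) ≤ ((cls \ P).card : ℝ) := by
          intro P hP
          have hm : M + k ≤ (cls.card : ℝ) := hbig x (Finset.mem_insert_self x t)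
          have hsd : cls.card ≤ (cls \ P).card + P.card := Finset.card_le_card_sdiff_add_card
          have hPc : P.card = c := card_of_mem_copies hP
          have hck : c + 1 ≤ k := by omega
          have : (cls.card : ℝ) ≤ ((cls \ P).card : ℝ) + c := by
            rw [← hPc]; exact_mod_cast hsd
          have hkc : (c : ℝ) + 1 ≤ (k : ℝ) := by exact_mod_cast hck
          linarith
        calc (M + 1) * ((copies feat t).card : ℝ)
            = ∑ _P ∈ copies feat t, (M + 1) := by
              rw [Finset.sum_const, nsmul_eq_mul, mul_comm]
          _ ≤ ∑ P ∈ copies feat t, ((cls \ P).card : ℝ) := Finset.sum_le_sum hbnd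
      -- upper bound on pairs
      have huppairs : (pairs.card : ℝ) ≤ ((c : ℝ) + 1) * ((copies feat (insert x t)).card : ℝ) := by
        have h1 : pairs.card ≤ (c + 1) * (pairs.image φ).card :=
          Finset.card_le_mul_card_image pairs (c + 1) hfiber
        have h2 : (pairs.image φ).card ≤ (copies feat (insert x t)).card := by
          apply Finset.card_le_card
          intro Q hQ
          obtain ⟨p, hp, rfl⟩ := Finset.mem_image.mp hQ
          exact himg p hp
        have := le_trans h1 (Nat.mul_le_mul_left (c + 1) h2)
        exact_mod_cast this
      -- combine
      rw [hcard]
      have hcpos : (0 : ℝ) < (c : ℝ) + 1 := by positivity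
      have hCs : ((M + 1) * ((copies feat t).card : ℝ)) / ((c : ℝ) + 1)
          ≤ ((copies feat (insert x t)).card : ℝ) := by
        rw [div_le_iff₀ hcpos]
        calc (M + 1) * ((copies feat t).card : ℝ) ≤ (pairs.card : ℝ) := hlowpairs
          _ ≤ ((c : ℝ) + 1) * ((copies feat (insert x t)).card : ℝ) := huppairs
          _ = ((copies feat (insert x t)).card : ℝ) * ((c : ℝ) + 1) := by ring
      have hfc : ((c.factorial : ℝ)) ≠ 0 := by
        exact_mod_cast c.factorial_ne_zero
      calc M ^ (c + 1) / (Nat.factorial (c + 1) : ℝ)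
          = (M * (M ^ c / (c.factorial : ℝ))) / ((c : ℝ) + 1) := by
            rw [Nat.factorial_succ, pow_succ]
            push_cast
            field_simp
        _ ≤ ((M + 1) * ((copies feat t).card : ℝ)) / ((c : ℝ) + 1) := by
            apply div_le_div_of_nonneg_right ?_ hcpos.le
            have h0 : (0 : ℝ) ≤ M ^ c / (c.factorial : ℝ) := by positivity
            have := mul_le_mul (le_add_of_nonneg_right (zero_le_one)) iht h0
              (by linarith : (0:ℝ) ≤ M + 1)
            exact this
        _ ≤ ((copies feat (insert x t)).card : ℝ) := hCs

end Aux


/-- External manipulability of uniform (MaxEntropy) panel selection: in a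
`κ`-rich instance with `n` pool members and panel size `k ≥ 1`, for every coalition `C` of size
`c ≤ κ'·n` (with `0 ≤ κ' < κ`), every joint misreport `feat'` (agreeing with `feat` off `C`),
and every non-coalition member `i ∉ C`, the loss in selection probability under the uniform
distributions over the true and manipulated panel sets is at most `k/(κ^k · n)`. -/
theorem external_manipulability_bound
    {N : Type*} [Fintype N] [DecidableEq N]
    {F : Type*} {V : F → Type*}
    (feat : N → ∀ f : F, V f) (k : ℕ) (hk : 1 ≤ k)
    (ℓ u : ((f : F) × V f) → ℕ)
    (Pan : Finset (Finset N))
    (hPan : Pan = Finset.univ.filter fun P : Finset N =>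
      P.card = k ∧ ∀ (f : F) (v : V f),
        ℓ ⟨f, v⟩ ≤ (P.filter fun t => feat t f = v).card ∧
        (P.filter fun t => feat t f = v).card ≤ u ⟨f, v⟩)
    (κ κ' : ℝ) (hκ : 0 < κ) (hκ'0 : 0 ≤ κ') (hκ' : κ' < κ)
    (hrich : IsRich feat Pan k κ) :
    ∀ (feat' : N → ∀ f : F, V f) (C : Finset N),
      (C.card : ℝ) ≤ κ' * Fintype.card N →
      (∀ i ∉ C, feat' i = feat i) →
      ∀ Pant : Finset (Finset N),
        Pant = (Finset.univ.filter fun P : Finset N =>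
          P.card = k ∧ ∀ (f : F) (v : V f),
            ℓ ⟨f, v⟩ ≤ (P.filter fun t => feat' t f = v).card ∧
            (P.filter fun t => feat' t f = v).card ≤ u ⟨f, v⟩) →
        ∀ i ∉ C,
          ((Pan.filter fun P => i ∈ P).card : ℝ) / Pan.card -
              ((Pant.filter fun P => i ∈ P).card : ℝ) / Pant.card ≤
            k / (κ ^ k * Fintype.card N) := by
  intro feat' C hC hagree Pant hPant i hiC
  obtain ⟨Wstar, hW1, hW2, P₀, hP₀, hP₀W⟩ := hrich
  set n := Fintype.card N with hn
  rw [hPan, Finset.mem_filter] at hP₀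
  obtain ⟨-, hP₀card, hP₀quota⟩ := hP₀
  have hkn : k ≤ n := by
    have := Finset.card_le_univ P₀
    rwa [hP₀card] at this
  have hn1 : 1 ≤ n := le_trans hk hkn
  have hnpos : (0 : ℝ) < (n : ℝ) := by exact_mod_cast hn1
  -- copies of P₀ are panels
  have hsub : copies feat P₀ ⊆ Pan := by
    intro P hP
    rw [hPan, Finset.mem_filter]
    refine ⟨Finset.mem_univ _, ?_, ?_⟩
    · rw [card_of_mem_copies hP, hP₀card]
    · intro f v
      have hq := filter_card_of_mem_copies (fun w : ∀ f : F, V f => w f = v) hP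
      rw [hq]
      exact hP₀quota f v
  -- lower bound on the number of panels
  have hbig : ∀ x ∈ P₀, κ * n + k ≤
      ((Finset.univ.filter fun t : N => feat t = feat x).card : ℝ) :=
    fun x hxP => hW2 (feat x) (hP₀W x hxP)
  have hlow : (κ * n) ^ k / (Nat.factorial k : ℝ) ≤ (Pan.card : ℝ) := by
    have h1 := copies_card_lower feat k (κ * n) (by positivity) P₀ (le_of_eq hP₀card) hbig
    rw [hP₀card] at h1
    calc (κ * n) ^ k / (Nat.factorial k : ℝ) ≤ ((copies feat P₀).card : ℝ) := h1
      _ ≤ (Pan.card : ℝ) := by exact_mod_cast Finset.card_le_card hsub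
  have hPanpos : (0 : ℝ) < (Pan.card : ℝ) := lt_of_lt_of_le (by positivity) hlow
  -- upper bound on panels containing i
  have hup : (Pan.filter fun P => i ∈ P).card ≤ (n - 1).choose (k - 1) := by
    have h1 : (Pan.filter fun P => i ∈ P).card ≤
        ((Finset.univ.erase i).powersetCard (k - 1)).card := by
      apply Finset.card_le_card_of_injOn (fun P => P.erase i)
      · intro P hP
        simp only [Finset.mem_coe, Finset.mem_filter] at hP ⊢
        obtain ⟨hP1, hP2⟩ := hP
        rw [hPan, Finset.mem_filter] at hP1
        rw [Finset.mem_powersetCard]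
        constructor
        · intro y hy
          rw [Finset.mem_erase] at hy ⊢
          exact ⟨hy.1, Finset.mem_univ y⟩
        · rw [Finset.card_erase_of_mem hP2, hP1.2.1]
      · intro P hP P' hP' hPP
        simp only [Finset.coe_filter, Set.mem_setOf_eq] at hP hP'
        have hPP' : P.erase i = P'.erase i := hPP
        have h2 : insert i (P.erase i) = insert i (P'.erase i) := by rw [hPP']
        rwa [Finset.insert_erase hP.2, Finset.insert_erase hP'.2] at h2
    rwa [Finset.card_powersetCard, Finset.card_erase_of_mem (Finset.mem_univ i),
      Finset.card_univ] at h1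
  -- numeric combination
  have hNat : (n - 1).choose (k - 1) * Nat.factorial k ≤ n ^ (k - 1) * k := by
    obtain ⟨k', rfl⟩ : ∃ k', k = k' + 1 := ⟨k - 1, by omega⟩
    simp only [Nat.add_sub_cancel]
    rw [Nat.factorial_succ]
    calc (n - 1).choose k' * ((k' + 1) * Nat.factorial k')
        = Nat.factorial k' * (n - 1).choose k' * (k' + 1) := by ring
      _ = (n - 1).descFactorial k' * (k' + 1) := by
          rw [Nat.descFactorial_eq_factorial_mul_choose]
      _ ≤ (n - 1) ^ k' * (k' + 1) :=
          Nat.mul_le_mul_right _ (Nat.descFactorial_le_pow _ _)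
      _ ≤ n ^ k' * (k' + 1) :=
          Nat.mul_le_mul_right _ (Nat.pow_le_pow_left (by omega) _)
  have hfinal : ((Pan.filter fun P => i ∈ P).card : ℝ) / (Pan.card : ℝ) ≤
      (k : ℝ) / (κ ^ k * n) := by
    have h1 : ((Pan.filter fun P => i ∈ P).card : ℝ) / (Pan.card : ℝ) ≤
        (((n - 1).choose (k - 1) : ℕ) : ℝ) / ((κ * n) ^ k / (Nat.factorial k : ℝ)) := by
      apply div_le_div₀ (by positivity) (by exact_mod_cast hup) (by positivity) hlow
    refine le_trans h1 ?_
    rw [div_div_eq_mul_div, mul_pow, div_le_div_iff₀ (by positivity) (by positivity)]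
    have hcast : (((n - 1).choose (k - 1) : ℕ) : ℝ) * (Nat.factorial k : ℝ) ≤
        (n : ℝ) ^ (k - 1) * k := by exact_mod_cast hNat
    have hnk : (n : ℝ) ^ (k - 1) * n = (n : ℝ) ^ k := by
      rw [← pow_succ]
      congr 1
      omega
    have h3 : (((n - 1).choose (k - 1) : ℕ) : ℝ) * (Nat.factorial k : ℝ) * n ≤
        (k : ℝ) * (n : ℝ) ^ k := by
      calc (((n - 1).choose (k - 1) : ℕ) : ℝ) * (Nat.factorial k : ℝ) * n
          ≤ ((n : ℝ) ^ (k - 1) * k) * n := by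
            exact mul_le_mul_of_nonneg_right hcast hnpos.le
        _ = (k : ℝ) * ((n : ℝ) ^ (k - 1) * n) := by ring
        _ = (k : ℝ) * (n : ℝ) ^ k := by rw [hnk]
    calc (((n - 1).choose (k - 1) : ℕ) : ℝ) * (Nat.factorial k : ℝ) * (κ ^ k * n)
        = κ ^ k * ((((n - 1).choose (k - 1) : ℕ) : ℝ) * (Nat.factorial k : ℝ) * n) := by ring
      _ ≤ κ ^ k * ((k : ℝ) * (n : ℝ) ^ k) := by
          exact mul_le_mul_of_nonneg_left h3 (by positivity)
      _ = (k : ℝ) * (κ ^ k * (n : ℝ) ^ k) := by ring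
  have hnt : (0 : ℝ) ≤ ((Pant.filter fun P => i ∈ P).card : ℝ) / (Pant.card : ℝ) := by
    positivity
  linarith
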